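/- arXiv:2303.16433 — 5 statements merged into one kernel-verified Lean document; each statement's English description precedes it below -/
import Mathlib

section
/- Let F : X → ℝⁿ be continuous and pseudo-monotone plus on a convex set X. Suppose x* ∈ X satisfies ⟨F(x*), x − x*⟩ ≥ 0 for all x ∈ X, and suppose x° ∈ X satisfies ⟨F(x°), x° − x*⟩ = 0. Then F(x°) = F(x*) and x° is also a critical point, i.e., ⟨F(x°), x − x°⟩ ≥ 0 for all x ∈ X. -/
open RealInnerProductSpace

/-- If `F` is continuous and pseudo-monotone plus on a convex set `X`, `x*` is a
critical point and `x°` satisfies `⟪F x°, x° - x*⟫ = 0`, then `F x° = F x*` and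
`x°` is also a critical point. -/
theorem stmt_3 {n : ℕ} (X : Set (EuclideanSpace ℝ (Fin n)))
    (hX : Convex ℝ X)
    (F : EuclideanSpace ℝ (Fin n) → EuclideanSpace ℝ (Fin n))
    (hF_cont : ContinuousOn F X)
    (hF_pm : ∀ x ∈ X, ∀ y ∈ X, 0 ≤ ⟪F y, x - y⟫ → 0 ≤ ⟪F x, x - y⟫)
    (hF_plus : ∀ x ∈ X, ∀ y ∈ X, 0 ≤ ⟪F y, x - y⟫ → ⟪F x, x - y⟫ = 0 → F x = F y)
    (xstar : EuclideanSpace ℝ (Fin n)) (hxstar : xstar ∈ X)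
    (hcp : ∀ x ∈ X, 0 ≤ ⟪F xstar, x - xstar⟫)
    (xcirc : EuclideanSpace ℝ (Fin n)) (hxcirc : xcirc ∈ X)
    (hzero : ⟪F xcirc, xcirc - xstar⟫ = 0) :
    F xcirc = F xstar ∧ ∀ x ∈ X, 0 ≤ ⟪F xcirc, x - xcirc⟫ := by
  have heq : F xcirc = F xstar :=
    hF_plus xcirc hxcirc xstar hxstar (hcp xcirc hxcirc) hzero
  refine ⟨heq, fun x hx => ?_⟩
  have h1 : ⟪F xstar, xcirc - xstar⟫ = 0 := heq ▸ hzero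
  have h2 := hcp x hx
  have : ⟪F xcirc, x - xcirc⟫ = ⟪F xstar, x - xstar⟫ - ⟪F xstar, xcirc - xstar⟫ := by
    rw [heq, ← inner_sub_right]; congr 1; abel
  rw [this, h1]
  linarith
end

section
/- Let (a_k)_{k≥1} be nonnegative reals with a_1 = 0, and let β : ℕ → ℝ_{≥0} satisfy β(k) → 0 as k → ∞. Suppose a_k ≤ β(π(k))·a_{π(k)} + c for all k ≥ 2, where c ≥ 0 and π(k) < k for all k. Then sup_k a_k < ∞. -/
open Filter

/-- If `a 1 = 0`, `a` is nonnegative, and `a k ≤ β (π k) * a (π k) + c` for `k ≥ 2`,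
where `π k < k` and `β k → 0`, then `(a k)_{k ≥ 1}` is uniformly bounded. -/
theorem stmt_5 (a : ℕ → ℝ) (ha : ∀ k, 0 ≤ a k) (ha1 : a 1 = 0)
    (β : ℕ → ℝ) (hβ_nonneg : ∀ k, 0 ≤ β k) (hβ : Tendsto β atTop (nhds 0))
    (c : ℝ) (hc : 0 ≤ c)
    (π : ℕ → ℕ) (hπ : ∀ k, 1 ≤ k → π k < k)
    (hrec : ∀ k, 2 ≤ k → a k ≤ β (π k) * a (π k) + c) :
    ∃ C : ℝ, ∀ k, 1 ≤ k → a k ≤ C := by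
  obtain ⟨N0, hN0⟩ := eventually_atTop.mp (hβ.eventually (gt_mem_nhds (by norm_num : (0:ℝ) < 1/2)))
  set N := max N0 1 with hNdef
  have hN1 : 1 ≤ N := le_max_right _ _
  have hNsmall : ∀ m, N ≤ m → β m < 1/2 := fun m hm => hN0 m (le_trans (le_max_left _ _) hm)
  have hne : (Finset.range N).Nonempty := ⟨0, Finset.mem_range.mpr hN1⟩
  set A := (Finset.range N).sup' hne a with hA
  set D := ((Finset.range N).sup' hne β) ⊔ 1 with hD
  have hAm : ∀ m, m < N → a m ≤ A := fun m hm => Finset.le_sup' a (Finset.mem_range.mpr hm)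
  have hDm : ∀ m, β m ≤ D := by
    intro m
    rcases lt_or_ge m N with h | h
    · exact le_trans (Finset.le_sup' β (Finset.mem_range.mpr h)) le_sup_left
    · exact le_trans (hNsmall m h).le (le_trans (by norm_num) le_sup_right)
  have hA0 : 0 ≤ A := le_trans (ha 0) (hAm 0 hN1)
  have hD0 : 0 ≤ D := le_trans zero_le_one le_sup_right
  refine ⟨max (D * A + c) (2 * c), ?_⟩
  intro k
  induction k using Nat.strong_induction_on with
  | _ k ih =>
    intro hk1
    rcases eq_or_lt_of_le hk1 with h1 | h2
    · rw [← h1, ha1]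
      have : 0 ≤ 2 * c := by linarith
      exact le_trans this (le_max_right _ _)
    · have hk2 : 2 ≤ k := h2
      have hrk := hrec k hk2
      rcases lt_or_ge (π k) N with hp | hp
      · have hmul : β (π k) * a (π k) ≤ D * A :=
          mul_le_mul (hDm (π k)) (hAm _ hp) (ha _) hD0
        exact le_trans (by linarith) (le_max_left (D * A + c) (2 * c))
      · have hπ1 : 1 ≤ π k := le_trans hN1 hp
        have hprev := ih (π k) (hπ k hk1) hπ1
        have hmul : β (π k) * a (π k) ≤ (1/2) * max (D * A + c) (2 * c) :=
          mul_le_mul (hNsmall _ hp).le hprev (ha _) (by norm_num)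
        have hMc : 2 * c ≤ max (D * A + c) (2 * c) := le_max_right _ _
        linarith
end

section
/- Suppose the realized delays satisfy d_t ≤ D for all t ≤ k, where D ≥ 0 is a constant. Under the priority-based utilization strategy in which feedback generated at time t arrives at time ⌈t + d_t⌉ and at each iteration the earliest unused feedback is consumed (or no update happens if none is available), the number of iterations among {1, …, k} with no available feedback is at most min(k, D + 1). -/
/-- Priority-based utilization strategy with delays bounded by `D`: the number of
iterations among `{1,…,k}` with no available feedback is at most `min k (D+1)`.
Here `c s` is the timestamp of the feedback consumed at iteration `s` (`c s = 0`
meaning no feedback available), feedback generated at time `t` arrives at time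
`⌈t + d t⌉`. -/
theorem stmt_6 (k : ℕ) (d : ℕ → ℝ) (D : ℝ) (hD : 0 ≤ D)
    (hd_nonneg : ∀ t, 0 ≤ d t)
    (hd_bdd : ∀ t : ℕ, 1 ≤ t → t ≤ k → d t ≤ D)
    (c : ℕ → ℕ)
    -- only feedback that has already arrived is consumed
    (h_arrived : ∀ s, c s ≠ 0 → 1 ≤ c s ∧ ⌈(c s : ℝ) + d (c s)⌉₊ ≤ s)
    -- each piece of feedback is consumed at most once
    (h_inj : ∀ s s', c s ≠ 0 → c s = c s' → s = s')
    -- greediness: if no feedback is consumed at iteration `s`, then every piece of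
    -- feedback that has arrived by time `s` was already consumed earlier
    (h_greedy : ∀ s, 1 ≤ s → c s = 0 →
      ∀ t : ℕ, 1 ≤ t → ⌈(t : ℝ) + d t⌉₊ ≤ s → ∃ s' < s, c s' = t) :
    (((Finset.Icc 1 k).filter (fun s => c s = 0)).card : ℝ) ≤ min (k : ℝ) (D + 1) := by
  classical
  set E := (Finset.Icc 1 k).filter (fun s => c s = 0) with hE
  have hEk : E.card ≤ k := by
    calc E.card ≤ (Finset.Icc 1 k).card := Finset.card_filter_le _ _
    _ = k := by simp
  have hkey : E.card ≤ ⌈D⌉₊ := by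
    by_cases hne : E.Nonempty
    · set m := E.max' hne with hm
      have hmE : m ∈ E := E.max'_mem hne
      have hm1 : 1 ≤ m := (Finset.mem_Icc.mp (Finset.mem_filter.mp hmE).1).1
      have hmk : m ≤ k := (Finset.mem_Icc.mp (Finset.mem_filter.mp hmE).1).2
      have hcm : c m = 0 := (Finset.mem_filter.mp hmE).2
      have hle : ∀ s ∈ E, s ≤ m := fun s hs => E.le_max' s hs
      clear_value m
      by_cases hcase : m ≤ ⌈D⌉₊
      · have hsub : E ⊆ Finset.Icc 1 m := fun s hs =>
          Finset.mem_Icc.mpr ⟨(Finset.mem_Icc.mp (Finset.mem_filter.mp hs).1).1,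
            hle s hs⟩
        calc E.card ≤ (Finset.Icc 1 m).card := Finset.card_le_card hsub
        _ = m := by simp
        _ ≤ ⌈D⌉₊ := hcase
      · push_neg at hcase
        set N := (Finset.Icc 1 (m-1)).filter (fun s => c s ≠ 0) with hN
        have hexists : ∀ t : ℕ, t ∈ Finset.Icc 1 (m - ⌈D⌉₊) → ∃ s', s' < m ∧ c s' = t := by
          intro t ht
          obtain ⟨ht1, ht2⟩ := Finset.mem_Icc.mp ht
          have htk : t ≤ k := le_trans (le_trans ht2 (Nat.sub_le _ _)) hmk
          have hceil : ⌈(t : ℝ) + d t⌉₊ ≤ m := by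
            have h1 : (t:ℝ) + d t ≤ D + (t : ℕ) := by
              have := hd_bdd t ht1 htk
              push_cast
              linarith
            calc ⌈(t:ℝ) + d t⌉₊ ≤ ⌈D + (t:ℕ)⌉₊ := Nat.ceil_le_ceil h1
            _ = ⌈D⌉₊ + t := Nat.ceil_add_natCast hD t
            _ ≤ m := by omega
          obtain ⟨s', hs', hcs'⟩ := h_greedy m hm1 hcm t ht1 hceil
          exact ⟨s', hs', hcs'⟩
        choose f hf1 hf2 using hexists
        have hmaps : ∀ (t : ℕ) (ht : t ∈ Finset.Icc 1 (m - ⌈D⌉₊)), f t ht ∈ N := by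
          intro t ht
          obtain ⟨ht1, ht2⟩ := Finset.mem_Icc.mp ht
          have hcne : c (f t ht) ≠ 0 := by rw [hf2 t ht]; omega
          have harr := (h_arrived _ hcne).2
          have hpos : 0 < ⌈(c (f t ht) : ℝ) + d (c (f t ht))⌉₊ := by
            rw [Nat.ceil_pos]
            have h1 : (1:ℝ) ≤ (c (f t ht) : ℝ) := by
              exact_mod_cast (h_arrived _ hcne).1
            linarith [hd_nonneg (c (f t ht))]
          have h1f : 1 ≤ f t ht := lt_of_lt_of_le hpos harr
          refine Finset.mem_filter.mpr ⟨Finset.mem_Icc.mpr ⟨h1f, ?_⟩, hcne⟩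
          have := hf1 t ht
          omega
        have hNcard : m - ⌈D⌉₊ ≤ N.card := by
          have key : (Finset.Icc 1 (m - ⌈D⌉₊)).card ≤ N.card := by
            apply Finset.card_le_card_of_injOn
              (fun t => if h : t ∈ Finset.Icc 1 (m - ⌈D⌉₊) then f t h else 0)
            · intro t ht
              simp only [dif_pos (Finset.mem_coe.mp ht)]
              exact hmaps t _
            · intro a ha b hb hab
              have ha' := Finset.mem_coe.mp ha
              have hb' := Finset.mem_coe.mp hb
              simp only [dif_pos ha', dif_pos hb'] at hab
              have h := congrArg c hab
              rw [hf2 a ha', hf2 b hb'] at h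
              exact h
          simpa using key
        have hEsub : E ⊆ insert m ((Finset.Icc 1 (m-1)) \ N) := by
          intro s hs
          have hs1 : 1 ≤ s := (Finset.mem_Icc.mp (Finset.mem_filter.mp hs).1).1
          have hsm : s ≤ m := hle s hs
          have hcs : c s = 0 := (Finset.mem_filter.mp hs).2
          rcases eq_or_lt_of_le hsm with h | h
          · exact Finset.mem_insert.mpr (Or.inl h)
          · refine Finset.mem_insert.mpr (Or.inr ?_)
            refine Finset.mem_sdiff.mpr ⟨Finset.mem_Icc.mpr ⟨hs1, by omega⟩, ?_⟩
            intro hsN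
            exact (Finset.mem_filter.mp hsN).2 hcs
        have hNsub : N ⊆ Finset.Icc 1 (m-1) := Finset.filter_subset _ _
        have hNle : N.card ≤ m - 1 := by
          calc N.card ≤ (Finset.Icc 1 (m-1)).card := Finset.card_le_card hNsub
          _ = m - 1 := by simp
        have hcard1 : ((Finset.Icc 1 (m-1)) \ N).card = (m-1) - N.card := by
          rw [Finset.card_sdiff_of_subset hNsub]
          simp
        calc E.card ≤ (insert m ((Finset.Icc 1 (m-1)) \ N)).card := Finset.card_le_card hEsub
        _ ≤ ((Finset.Icc 1 (m-1)) \ N).card + 1 := Finset.card_insert_le _ _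
        _ = (m-1) - N.card + 1 := by rw [hcard1]
        _ ≤ ⌈D⌉₊ := by
          omega
    · rw [Finset.not_nonempty_iff_eq_empty] at hne
      simp [hne]
  refine le_min ?_ ?_
  · exact_mod_cast hEk
  · calc (E.card : ℝ) ≤ (⌈D⌉₊ : ℝ) := by exact_mod_cast hkey
    _ ≤ D + 1 := le_of_lt (Nat.ceil_lt_add_one hD)
end

section
/- If α_γ ∈ (1/2, 1], α_d ∈ [0, 1), and 2α_γ − α_d > 1, then the series Σ_{k≥1} γ_k · (k^{α_d} + d̄) · γ_{max(1, k − ⌈k^{α_d}+d̄⌉)} converges, where γ_k = γ_0/(k+K_γ)^{α_γ} with γ_0 > 0, K_γ ≥ 0, d̄ ≥ 0. -/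
/-- Summability of the delay-induced error term: with `γ k = γ₀/(k+Kγ)^αγ`,
`1/2 < αγ ≤ 1`, `0 ≤ αd < 1`, and `2αγ - αd > 1`, the series
`∑_{k ≥ 1} γ k (k^αd + d̄) γ_{max(1, k - ⌈k^αd + d̄⌉)}` converges. -/
theorem stmt_7 (γ0 : ℝ) (hγ0 : 0 < γ0) (Kγ : ℝ) (hKγ : 0 ≤ Kγ)
    (αγ : ℝ) (hαγ0 : 1 / 2 < αγ) (hαγ1 : αγ ≤ 1)
    (αd : ℝ) (hαd0 : 0 ≤ αd) (hαd1 : αd < 1)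
    (hsum : 1 < 2 * αγ - αd)
    (db : ℝ) (hdb : 0 ≤ db)
    (γ : ℕ → ℝ) (hγ : ∀ k, γ k = γ0 / ((k : ℝ) + Kγ) ^ αγ) :
    Summable (fun k : ℕ =>
      γ (k + 1) * (((k + 1 : ℕ) : ℝ) ^ αd + db) *
        γ (max 1 ((k + 1) - ⌈((k + 1 : ℕ) : ℝ) ^ αd + db⌉₊))) := by
  have hαγpos : 0 < αγ := by linarith
  -- eventually k^αd + db + 1 ≤ (k+1)/2
  have h1 : ∀ᶠ (k : ℕ) in Filter.atTop,
      ((k : ℝ) + 1) ^ αd + db + 1 ≤ ((k : ℝ) + 1) / 2 := by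
    have hpos : 0 < 1 - αd := by linarith
    have t0 : Filter.Tendsto (fun k : ℕ => (k : ℝ) + 1) Filter.atTop Filter.atTop :=
      Filter.tendsto_atTop_add_const_right _ 1 tendsto_natCast_atTop_atTop
    have t1 : Filter.Tendsto (fun k : ℕ => ((k : ℝ) + 1) ^ (αd - 1))
        Filter.atTop (nhds 0) := by
      have := (tendsto_rpow_neg_atTop hpos).comp t0
      simpa [Function.comp_def, neg_sub] using this
    have h2 : ∀ᶠ k : ℕ in Filter.atTop, ((k : ℝ) + 1) ^ (αd - 1) < 1 / 4 :=
      t1.eventually_lt_const (by norm_num)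
    have h3 : ∀ᶠ k : ℕ in Filter.atTop, 4 * (db + 1) ≤ (k : ℝ) + 1 :=
      t0.eventually_ge_atTop _
    filter_upwards [h2, h3] with k hk2 hk3
    have hx : (0 : ℝ) < (k : ℝ) + 1 := by positivity
    have hr : ((k : ℝ) + 1) ^ αd = ((k : ℝ) + 1) ^ (αd - 1) * ((k : ℝ) + 1) := by
      rw [← Real.rpow_add_one (ne_of_gt hx)]; ring_nf
    have : ((k : ℝ) + 1) ^ αd ≤ ((k : ℝ) + 1) / 4 := by
      rw [hr]
      nlinarith [hk2, hx]
    nlinarith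
  obtain ⟨N, hN⟩ := Filter.eventually_atTop.mp h1
  rw [← summable_nat_add_iff N]
  set C : ℝ := γ0 ^ 2 * (1 + db) * 2 ^ αγ with hC
  apply Summable.of_nonneg_of_le
      (f := fun n : ℕ => C * ((n : ℝ) + N + 1) ^ (αd - 2 * αγ))
  · intro n
    simp only [hγ]
    have h0 : (0:ℝ) ≤ ((n + N + 1 : ℕ) : ℝ) + Kγ := by positivity
    have h0' : (0:ℝ) ≤ ((max 1 ((n + N + 1) - ⌈((n + N + 1 : ℕ) : ℝ) ^ αd + db⌉₊) : ℕ) : ℝ) + Kγ := by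
      positivity
    have := Real.rpow_nonneg h0 αγ
    have := Real.rpow_nonneg h0' αγ
    positivity
  · intro n
    set k := n + N with hkdef
    have hk : N ≤ k := Nat.le_add_left N n
    have hkb := hN k hk
    set x : ℝ := (k : ℝ) + 1 with hxdef
    have hx : (0 : ℝ) < x := by positivity
    have hcast : ((k + 1 : ℕ) : ℝ) = x := by push_cast; ring
    set c : ℕ := ⌈((k + 1 : ℕ) : ℝ) ^ αd + db⌉₊ with hcdef
    have hcle : (c : ℝ) ≤ x / 2 := by
      have h0 : (0 : ℝ) ≤ x ^ αd + db := by positivity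
      have h := Nat.ceil_lt_add_one h0
      have hce : c = ⌈x ^ αd + db⌉₊ := by rw [hcdef, hcast]
      rw [hce]
      linarith
    have hcle2 : c ≤ k + 1 := by
      have : (c : ℝ) ≤ ((k + 1 : ℕ) : ℝ) := by rw [hcast]; linarith
      exact_mod_cast this
    set m : ℕ := max 1 ((k + 1) - c) with hmdef
    have hm : x / 2 ≤ (m : ℝ) := by
      have h1 : (↑((k + 1) - c) : ℝ) = x - c := by
        rw [Nat.cast_sub hcle2, hcast]
      have h2 : (k + 1) - c ≤ m := le_max_right _ _
      have : (↑((k + 1) - c) : ℝ) ≤ (m : ℝ) := by exact_mod_cast h2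
      rw [h1] at this
      linarith
    have hxK : (0 : ℝ) < x ^ αγ := Real.rpow_pos_of_pos hx αγ
    have hx2 : (0 : ℝ) < (x / 2) ^ αγ := Real.rpow_pos_of_pos (by linarith) αγ
    have key : γ (k + 1) * (((k + 1 : ℕ) : ℝ) ^ αd + db) * γ m ≤ C * x ^ (αd - 2 * αγ) := by
      rw [hγ, hγ, hcast]
      calc γ0 / (x + Kγ) ^ αγ * (x ^ αd + db) * (γ0 / ((m : ℝ) + Kγ) ^ αγ)
          ≤ γ0 / x ^ αγ * ((1 + db) * x ^ αd) * (γ0 / (x / 2) ^ αγ) := by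
            have b1 : γ0 / (x + Kγ) ^ αγ ≤ γ0 / x ^ αγ := by
              apply div_le_div_of_nonneg_left (le_of_lt hγ0) hxK
              apply Real.rpow_le_rpow (le_of_lt hx) (by linarith) (le_of_lt hαγpos)
            have b2 : x ^ αd + db ≤ (1 + db) * x ^ αd := by
              have hx1 : (1 : ℝ) ≤ x := by rw [hxdef]; linarith [show (0:ℝ) ≤ (k:ℝ) from Nat.cast_nonneg k]
              have hone : (1 : ℝ) ≤ x ^ αd := by
                simpa using Real.rpow_le_rpow_of_exponent_le hx1 hαd0
              nlinarith
            have b3 : γ0 / ((m : ℝ) + Kγ) ^ αγ ≤ γ0 / (x / 2) ^ αγ := by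
              apply div_le_div_of_nonneg_left (le_of_lt hγ0) hx2
              apply Real.rpow_le_rpow (by linarith) (by linarith) (le_of_lt hαγpos)
            have nn1 : 0 ≤ γ0 / (x + Kγ) ^ αγ := by
              have : (0:ℝ) ≤ (x + Kγ) ^ αγ :=
                Real.rpow_nonneg (by positivity) αγ
              positivity
            have nn2 : 0 ≤ x ^ αd + db := by positivity
            have nn3 : 0 ≤ γ0 / ((m : ℝ) + Kγ) ^ αγ := by
              have : (0:ℝ) ≤ ((m : ℝ) + Kγ) ^ αγ :=
                Real.rpow_nonneg (by positivity) αγ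
              positivity
            have nn4 : 0 ≤ γ0 / (x / 2) ^ αγ := by positivity
            calc γ0 / (x + Kγ) ^ αγ * (x ^ αd + db) * (γ0 / ((m : ℝ) + Kγ) ^ αγ)
                ≤ γ0 / x ^ αγ * ((1 + db) * x ^ αd) * (γ0 / ((m : ℝ) + Kγ) ^ αγ) := by
                  apply mul_le_mul_of_nonneg_right _ nn3
                  apply mul_le_mul b1 b2 nn2 (by positivity)
              _ ≤ γ0 / x ^ αγ * ((1 + db) * x ^ αd) * (γ0 / (x / 2) ^ αγ) := by
                  apply mul_le_mul_of_nonneg_left b3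
                  have : (0:ℝ) ≤ x ^ αd := Real.rpow_nonneg (le_of_lt hx) αd
                  positivity
        _ = C * x ^ (αd - 2 * αγ) := by
            rw [Real.div_rpow (le_of_lt hx) (by norm_num : (0:ℝ) ≤ 2),
              Real.rpow_sub hx, show (2:ℝ) * αγ = αγ + αγ by ring,
              Real.rpow_add hx, hC]
            field_simp
    have hxeq : (n : ℝ) + N + 1 = x := by rw [hxdef, hkdef]; push_cast; ring
    rw [hxeq]
    exact key
  · apply Summable.mul_left
    have h := (Real.summable_nat_rpow (p := αd - 2 * αγ)).mpr (by linarith)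
    have h2 := (summable_nat_add_iff (N + 1)).mpr h
    apply h2.congr
    intro n
    push_cast
    ring_nf
end

section
/- Let (X_k) be a sequence in a compact set X ⊆ ℝⁿ and let F : X → ℝⁿ be continuous and pseudo-monotone plus. Let x* ∈ X be a critical point (⟨F(x*), x − x*⟩ ≥ 0 for all x ∈ X). If liminf_{k→∞} ⟨F(X_k), X_k − x*⟩ = 0, then there exists a subsequence X_{ℓ_m} converging to some X° ∈ X which is itself a critical point of F on X. -/
open Filter RealInnerProductSpace

/-- If `(X_k)` lies in a compact set `X`, `F` is continuous and pseudo-monotone plus,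
`x*` is a critical point, and `liminf ⟪F X_k, X_k - x*⟫ = 0`, then a subsequence of
`(X_k)` converges to a point `X° ∈ X` which is itself a critical point. -/
theorem stmt_10 {n : ℕ} (X : Set (EuclideanSpace ℝ (Fin n)))
    (hX_cpt : IsCompact X)
    (Xs : ℕ → EuclideanSpace ℝ (Fin n)) (hXs : ∀ k, Xs k ∈ X)
    (F : EuclideanSpace ℝ (Fin n) → EuclideanSpace ℝ (Fin n))
    (hF_cont : ContinuousOn F X)
    (hF_pm : ∀ x ∈ X, ∀ y ∈ X, 0 ≤ ⟪F y, x - y⟫ → 0 ≤ ⟪F x, x - y⟫)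
    (hF_plus : ∀ x ∈ X, ∀ y ∈ X, 0 ≤ ⟪F y, x - y⟫ → ⟪F x, x - y⟫ = 0 → F x = F y)
    (xstar : EuclideanSpace ℝ (Fin n)) (hxstar : xstar ∈ X)
    (hcp : ∀ x ∈ X, 0 ≤ ⟪F xstar, x - xstar⟫)
    (hliminf : liminf (fun k => ⟪F (Xs k), Xs k - xstar⟫) atTop = 0) :
    ∃ X0 ∈ X, ∃ φ : ℕ → ℕ, StrictMono φ ∧
      Tendsto (Xs ∘ φ) atTop (nhds X0) ∧ ∀ x ∈ X, 0 ≤ ⟪F X0, x - X0⟫ := by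
  set g : ℕ → ℝ := fun k => ⟪F (Xs k), Xs k - xstar⟫ with hg
  have hXne : X.Nonempty := ⟨xstar, hxstar⟩
  have hcont_h : ContinuousOn (fun x => ⟪F x, x - xstar⟫) X :=
    hF_cont.inner ((continuous_id.sub continuous_const).continuousOn)
  have hbd_below : IsBoundedUnder (· ≥ ·) atTop g := by
    obtain ⟨xm, hxm, hmin⟩ := hX_cpt.exists_isMinOn hXne hcont_h
    exact isBoundedUnder_of ⟨⟪F xm, xm - xstar⟫, fun k => hmin (hXs k)⟩
  have hbd_above : IsBoundedUnder (· ≤ ·) atTop g := by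
    obtain ⟨xm, hxm, hmax⟩ := hX_cpt.exists_isMaxOn hXne hcont_h
    exact isBoundedUnder_of ⟨⟪F xm, xm - xstar⟫, fun k => hmax (hXs k)⟩
  have hfreq : ∀ m : ℕ, ∃ᶠ k in atTop, |g k| < 1/(m+1) := by
    intro m
    have hpos : (0:ℝ) < 1/(m+1) := by positivity
    have h1 : ∃ᶠ k in atTop, g k < 1/(m+1) :=
      frequently_lt_of_liminf_lt hbd_above.isCoboundedUnder_ge (by rw [hliminf]; exact hpos)
    have h2 : ∀ᶠ k in atTop, -(1/(m+1 : ℝ)) < g k :=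
      eventually_lt_of_lt_liminf (by rw [hliminf]; linarith) hbd_below
    exact (h1.and_eventually h2).mono fun k ⟨ha, hb⟩ => abs_lt.mpr ⟨hb, ha⟩
  obtain ⟨ψ, hψ, hψP⟩ := Filter.extraction_forall_of_frequently hfreq
  have hgψ : Tendsto (g ∘ ψ) atTop (nhds 0) := by
    apply squeeze_zero_norm (fun m => (hψP m).le)
    exact tendsto_one_div_add_atTop_nhds_zero_nat
  obtain ⟨X0, hX0, φ, hφ, hconv⟩ := hX_cpt.tendsto_subseq (fun m => hXs (ψ m))
  refine ⟨X0, hX0, ψ ∘ φ, hψ.comp hφ, ?_, ?_⟩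
  · exact hconv
  have hconvW : Tendsto ((Xs ∘ ψ) ∘ φ) atTop (nhdsWithin X0 X) :=
    tendsto_nhdsWithin_iff.mpr ⟨hconv, Filter.Eventually.of_forall fun m => hXs _⟩
  have hFcv : Tendsto (F ∘ (Xs ∘ ψ) ∘ φ) atTop (nhds (F X0)) :=
    (hF_cont X0 hX0).tendsto.comp hconvW
  have hinner : Tendsto (fun m => ⟪F ((Xs ∘ ψ ∘ φ) m), (Xs ∘ ψ ∘ φ) m - xstar⟫) atTop
      (nhds ⟪F X0, X0 - xstar⟫) :=
    hFcv.inner (hconv.sub tendsto_const_nhds)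
  have hgφ : Tendsto (fun m => g (ψ (φ m))) atTop (nhds 0) :=
    hgψ.comp hφ.tendsto_atTop
  have hzero : ⟪F X0, X0 - xstar⟫ = 0 := (tendsto_nhds_unique hgφ hinner).symm
  have h1 : 0 ≤ ⟪F xstar, X0 - xstar⟫ := hcp X0 hX0
  have hFeq : F X0 = F xstar := hF_plus X0 hX0 xstar hxstar h1 hzero
  have hzero' : ⟪F xstar, X0 - xstar⟫ = 0 := hFeq ▸ hzero
  intro x hx
  have hx1 : 0 ≤ ⟪F xstar, x - xstar⟫ := hcp x hx
  have hsplit : x - X0 = (x - xstar) - (X0 - xstar) := by abel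
  rw [hFeq, hsplit, inner_sub_right, hzero']
  linarith
end
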